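/- Let C be a monoidal category such that the identity functor of C admits a unital magma structure (μ, η), and suppose all idempotents in C split (C is idempotent complete). Then C has all finite coproducts. -/

import Mathlib

open CategoryTheory CategoryTheory.Limits CategoryTheory.MonoidalCategory

/-- A unital magma structure on the identity functor of a monoidal category: natural
families `μ_A : A ⊗ A ⟶ A` and `η_A : 𝟙_C ⟶ A` satisfying the two unit laws. -/
structure IdMagma (C : Type*) [Category C] [MonoidalCategory C] where
  μ : ∀ A : C, A ⊗ A ⟶ A
  η : ∀ A : C, 𝟙_ C ⟶ A
  μ_natural : ∀ {A B : C} (f : A ⟶ B), (f ⊗ₘ f) ≫ μ B = μ A ≫ f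
  η_natural : ∀ {A B : C} (f : A ⟶ B), η A ≫ f = η B
  left_unit : ∀ A : C, (λ_ A).inv ≫ (η A ▷ A) ≫ μ A = 𝟙 A
  right_unit : ∀ A : C, (ρ_ A).inv ≫ (A ◁ η A) ≫ μ A = 𝟙 A

namespace IdMagmaAux

variable {C : Type*} [Category C] [MonoidalCategory C] (m : IdMagma C)

/-- first injection into the tensor product -/
noncomputable def iA (A B : C) : A ⟶ A ⊗ B := (ρ_ A).inv ≫ (A ◁ m.η B)

/-- second injection into the tensor product -/
noncomputable def iB (A B : C) : B ⟶ A ⊗ B := (λ_ B).inv ≫ (m.η A ▷ B)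

lemma iA_desc {A B X : C} (f : A ⟶ X) (g : B ⟶ X) :
    iA m A B ≫ (f ⊗ₘ g) ≫ m.μ X = f := by
  have h1 : (A ◁ m.η B) ≫ (f ⊗ₘ g) = f ⊗ₘ (m.η B ≫ g) := by
    rw [← MonoidalCategory.id_tensorHom, tensorHom_comp_tensorHom, Category.id_comp]
  have h2 : m.η B ≫ g = m.η X := m.η_natural g
  have h3 : (ρ_ A).inv ≫ (f ⊗ₘ m.η X) = f ≫ (ρ_ X).inv ≫ (X ◁ m.η X) := by
    rw [MonoidalCategory.tensorHom_def]
    simp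
  calc iA m A B ≫ (f ⊗ₘ g) ≫ m.μ X
      = (ρ_ A).inv ≫ ((A ◁ m.η B) ≫ (f ⊗ₘ g)) ≫ m.μ X := by
        simp [iA]
    _ = ((ρ_ A).inv ≫ (f ⊗ₘ m.η X)) ≫ m.μ X := by rw [h1, h2]; simp
    _ = f ≫ ((ρ_ X).inv ≫ (X ◁ m.η X) ≫ m.μ X) := by rw [h3]; simp
    _ = f := by rw [m.right_unit]; simp

lemma iB_desc {A B X : C} (f : A ⟶ X) (g : B ⟶ X) :
    iB m A B ≫ (f ⊗ₘ g) ≫ m.μ X = g := by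
  have h1 : (m.η A ▷ B) ≫ (f ⊗ₘ g) = (m.η A ≫ f) ⊗ₘ g := by
    rw [← MonoidalCategory.tensorHom_id, tensorHom_comp_tensorHom, Category.id_comp]
  have h2 : m.η A ≫ f = m.η X := m.η_natural f
  have h3 : (λ_ B).inv ≫ (m.η X ⊗ₘ g) = g ≫ (λ_ X).inv ≫ (m.η X ▷ X) := by
    rw [tensorHom_def']
    simp
  calc iB m A B ≫ (f ⊗ₘ g) ≫ m.μ X
      = (λ_ B).inv ≫ ((m.η A ▷ B) ≫ (f ⊗ₘ g)) ≫ m.μ X := by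
        simp [iB]
    _ = ((λ_ B).inv ≫ (m.η X ⊗ₘ g)) ≫ m.μ X := by rw [h1, h2]; simp
    _ = g ≫ ((λ_ X).inv ≫ (m.η X ▷ X) ≫ m.μ X) := by rw [h3]; simp
    _ = g := by rw [m.left_unit]; simp

/-- the canonical idempotent on `A ⊗ B` -/
noncomputable def e (A B : C) : A ⊗ B ⟶ A ⊗ B :=
  (iA m A B ⊗ₘ iB m A B) ≫ m.μ (A ⊗ B)

lemma iA_e (A B : C) : iA m A B ≫ e m A B = iA m A B := iA_desc m _ _
lemma iB_e (A B : C) : iB m A B ≫ e m A B = iB m A B := iB_desc m _ _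

lemma e_idem (A B : C) : e m A B ≫ e m A B = e m A B := by
  have hnat := m.μ_natural (e m A B)
  calc e m A B ≫ e m A B
      = (iA m A B ⊗ₘ iB m A B) ≫ (m.μ (A ⊗ B) ≫ e m A B) := by
        simp [e, Category.assoc]
    _ = (iA m A B ⊗ₘ iB m A B) ≫ (e m A B ⊗ₘ e m A B) ≫ m.μ (A ⊗ B) := by rw [← hnat]
    _ = ((iA m A B ≫ e m A B) ⊗ₘ (iB m A B ≫ e m A B)) ≫ m.μ (A ⊗ B) := by
        rw [tensorHom_comp_tensorHom_assoc]
    _ = e m A B := by rw [iA_e, iB_e]; rfl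

end IdMagmaAux

open IdMagmaAux in
/-- If the identity functor of a monoidal category admits a unital magma structure and
idempotents split, then the category has all finite coproducts. -/
theorem hasFiniteCoproducts_of_idMagma {C : Type*} [Category C] [MonoidalCategory C]
    (m : IdMagma C) [IsIdempotentComplete C] :
    HasFiniteCoproducts C := by
  have hinit : HasInitial C := by
    have hid : m.η (𝟙_ C) ≫ m.η (𝟙_ C) = m.η (𝟙_ C) := m.η_natural _
    obtain ⟨Y, i, r, hir, hri⟩ :=
      IsIdempotentComplete.idempotents_split (𝟙_ C) (m.η (𝟙_ C)) hid
    have hY : IsInitial Y := by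
      apply IsInitial.ofUniqueHom (fun A => i ≫ m.η A)
      intro A h
      have h2 : m.η (𝟙_ C) ≫ r = r := by
        rw [← hri, Category.assoc, hir, Category.comp_id]
      have h1 : r ≫ h = m.η A := by
        conv_lhs => rw [← h2]
        rw [Category.assoc]
        exact m.η_natural (r ≫ h)
      calc h = (i ≫ r) ≫ h := by rw [hir, Category.id_comp]
        _ = i ≫ m.η A := by rw [Category.assoc, h1]
    exact hY.hasInitial
  have hcol : ∀ A B : C, HasColimit (pair A B) := by
    intro A B
    obtain ⟨Y, i, r, hir, hri⟩ :=
      IsIdempotentComplete.idempotents_split (A ⊗ B) (e m A B) (e_idem m A B)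
    refine HasColimit.mk ⟨BinaryCofan.mk (iA m A B ≫ r) (iB m A B ≫ r), ?_⟩
    apply BinaryCofan.isColimitMk (fun s => i ≫ (s.inl ⊗ₘ s.inr) ≫ m.μ s.pt)
    · intro s
      calc (iA m A B ≫ r) ≫ i ≫ (s.inl ⊗ₘ s.inr) ≫ m.μ s.pt
          = iA m A B ≫ (r ≫ i) ≫ (s.inl ⊗ₘ s.inr) ≫ m.μ s.pt := by simp
        _ = (iA m A B ≫ e m A B) ≫ (s.inl ⊗ₘ s.inr) ≫ m.μ s.pt := by
            rw [hri]; simp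
        _ = (show A ⟶ s.pt from s.inl) := by rw [iA_e]; exact iA_desc m _ _
    · intro s
      calc (iB m A B ≫ r) ≫ i ≫ (s.inl ⊗ₘ s.inr) ≫ m.μ s.pt
          = iB m A B ≫ (r ≫ i) ≫ (s.inl ⊗ₘ s.inr) ≫ m.μ s.pt := by simp
        _ = (iB m A B ≫ e m A B) ≫ (s.inl ⊗ₘ s.inr) ≫ m.μ s.pt := by
            rw [hri]; simp
        _ = (show B ⟶ s.pt from s.inr) := by rw [iB_e]; exact iB_desc m _ _
    · intro s h hl hr
      have key : (s.inl ⊗ₘ s.inr) ≫ m.μ s.pt = e m A B ≫ r ≫ h := by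
        rw [← hl, ← hr]
        calc ((iA m A B ≫ r) ≫ h ⊗ₘ (iB m A B ≫ r) ≫ h) ≫ m.μ s.pt
            = (iA m A B ⊗ₘ iB m A B) ≫ ((r ≫ h) ⊗ₘ (r ≫ h)) ≫ m.μ s.pt := by
              rw [tensorHom_comp_tensorHom_assoc]; simp
          _ = (iA m A B ⊗ₘ iB m A B) ≫ m.μ (A ⊗ B) ≫ r ≫ h := by
              rw [m.μ_natural (r ≫ h)]
          _ = e m A B ≫ r ≫ h := by simp [IdMagmaAux.e]
      erw [key]; rw [← hri]
      simp only [← Category.assoc]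
      rw [hir]
      simp [hir]
  have hbin : HasBinaryCoproducts C :=
    @hasBinaryCoproducts_of_hasColimit_pair _ _ (fun {X Y} => hcol X Y)
  exact hasFiniteCoproducts_of_has_binary_and_initial
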